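/- Under the stated hypotheses, sup_{k∈ℤ} ‖k·(T_{k+1} − T_k)‖ < ∞, i.e. there exists a constant M > 0 such that ‖k·(L_{k+1}·N_{k+1} − L_k·N_k)‖ ≤ M for all integers k. -/

import Mathlib

open Finset

/-- The operator `D_k := (Σ_{j=1}^{n} (ik)^{j})·I − A − L_k`. -/
noncomputable def Dop {X : Type*} [NormedAddCommGroup X] [NormedSpace ℂ X]
    (n : ℕ) (A : X →L[ℂ] X) (L : ℤ → X →L[ℂ] X) (k : ℤ) : X →L[ℂ] X :=
  (∑ j ∈ Finset.Icc 1 n, (Complex.I * (k : ℂ)) ^ (j : ℕ)) • (1 : X →L[ℂ] X) - A - L k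

lemma scalar_bound_aux (n : ℕ) (k : ℤ) :
    ‖(k : ℂ) * ∑ j ∈ Finset.Icc 1 n,
      ((Complex.I * ((k:ℂ)+1)) ^ j - (Complex.I * (k:ℂ)) ^ j)‖ ≤
      (n^2 * 2^n : ℝ) * (max 1 (|k| : ℝ))^n := by
  set m : ℝ := max 1 (|k| : ℝ) with hm
  have hm1 : (1:ℝ) ≤ m := le_max_left _ _
  have hm0 : (0:ℝ) ≤ m := by linarith
  have hk : ‖(k : ℂ)‖ ≤ m := by
    have : ‖(k : ℂ)‖ = (|k| : ℝ) := by
      simp [Complex.norm_intCast]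
    rw [this]; exact le_max_right _ _
  have hk1 : ‖(k : ℂ) + 1‖ ≤ 2 * m := by
    calc ‖(k:ℂ)+1‖ ≤ ‖(k:ℂ)‖ + ‖(1:ℂ)‖ := norm_add_le _ _
    _ = ‖(k:ℂ)‖ + 1 := by rw [norm_one]
    _ ≤ 2 * m := by linarith
  -- per-term bound
  have hterm : ∀ j ∈ Finset.Icc 1 n,
      ‖(Complex.I * ((k:ℂ)+1)) ^ j - (Complex.I * (k:ℂ)) ^ j‖ ≤
        (n : ℝ) * 2^n * m^(n-1) := by
    intro j hj
    rw [Finset.mem_Icc] at hj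
    have hfac : (Complex.I * ((k:ℂ)+1)) ^ j - (Complex.I * (k:ℂ)) ^ j
        = Complex.I ^ j * (((k:ℂ)+1) ^ j - (k:ℂ) ^ j) := by
      rw [mul_pow, mul_pow, ← mul_sub]
    rw [hfac, norm_mul, norm_pow, Complex.norm_I, one_pow, one_mul]
    have hgeo : ((k:ℂ)+1) ^ j - (k:ℂ) ^ j
        = (∑ i ∈ range j, ((k:ℂ)+1) ^ i * (k:ℂ) ^ (j - 1 - i)) * (((k:ℂ)+1) - (k:ℂ)) :=
      (geom_sum₂_mul _ _ j).symm
    rw [hgeo]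
    have h1 : (((k:ℂ)+1) - (k:ℂ)) = 1 := by ring
    rw [h1, mul_one]
    calc ‖∑ i ∈ range j, ((k:ℂ)+1) ^ i * (k:ℂ) ^ (j - 1 - i)‖
        ≤ ∑ i ∈ range j, ‖((k:ℂ)+1) ^ i * (k:ℂ) ^ (j - 1 - i)‖ :=
          norm_sum_le _ _
      _ ≤ ∑ i ∈ range j, (2^n * m^(n-1) : ℝ) := by
          apply Finset.sum_le_sum
          intro i hi
          rw [Finset.mem_range] at hi
          rw [norm_mul, norm_pow, norm_pow]
          have b1 : ‖(k:ℂ)+1‖ ^ i ≤ (2*m)^i :=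
            pow_le_pow_left₀ (norm_nonneg _) hk1 i
          have b2 : ‖(k:ℂ)‖ ^ (j-1-i) ≤ m^(j-1-i) :=
            pow_le_pow_left₀ (norm_nonneg _) hk (j-1-i)
          calc ‖(k:ℂ)+1‖ ^ i * ‖(k:ℂ)‖ ^ (j-1-i)
              ≤ (2*m)^i * m^(j-1-i) := by
                apply mul_le_mul b1 b2 (pow_nonneg (norm_nonneg _) _)
                  (pow_nonneg (by linarith) _)
            _ = 2^i * (m^i * m^(j-1-i)) := by rw [mul_pow]; ring
            _ = 2^i * m^(i + (j-1-i)) := by rw [pow_add]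
            _ ≤ 2^n * m^(n-1) := by
                have e1 : i + (j-1-i) ≤ n - 1 := by omega
                have : (2:ℝ)^i ≤ 2^n := pow_le_pow_right₀ (by norm_num) (by omega)
                have : m^(i+(j-1-i)) ≤ m^(n-1) := pow_le_pow_right₀ hm1 e1
                have h2i : (0:ℝ) ≤ 2^i := by positivity
                nlinarith [pow_nonneg hm0 (i+(j-1-i)), pow_pos (show (0:ℝ)<2 by norm_num) n]
      _ = (j : ℝ) * (2^n * m^(n-1)) := by rw [Finset.sum_const, Finset.card_range]; ring
      _ ≤ (n : ℝ) * 2^n * m^(n-1) := by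
          have hjn : (j:ℝ) ≤ n := by exact_mod_cast hj.2
          have h' := mul_le_mul_of_nonneg_right hjn
            (by positivity : (0:ℝ) ≤ 2^n * m^(n-1))
          nlinarith [h']
  calc ‖(k : ℂ) * ∑ j ∈ Finset.Icc 1 n, ((Complex.I * ((k:ℂ)+1)) ^ j - (Complex.I * (k:ℂ)) ^ j)‖
      = ‖(k:ℂ)‖ * ‖∑ j ∈ Finset.Icc 1 n, ((Complex.I * ((k:ℂ)+1)) ^ j - (Complex.I * (k:ℂ)) ^ j)‖ := norm_mul _ _
    _ ≤ m * ∑ j ∈ Finset.Icc 1 n, ‖(Complex.I * ((k:ℂ)+1)) ^ j - (Complex.I * (k:ℂ)) ^ j‖ := by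
        apply mul_le_mul hk (norm_sum_le _ _) (norm_nonneg _) hm0
    _ ≤ m * ∑ j ∈ Finset.Icc 1 n, ((n : ℝ) * 2^n * m^(n-1)) := by
        apply mul_le_mul_of_nonneg_left (Finset.sum_le_sum hterm) hm0
    _ = m * ((n:ℝ) * ((n : ℝ) * 2^n * m^(n-1))) := by
        rw [Finset.sum_const, Nat.card_Icc]
        simp only [smul_eq_mul, Nat.add_sub_cancel]
        ring
    _ = (n^2 * 2^n : ℝ) * (m^(n-1) * m) := by ring
    _ ≤ (n^2 * 2^n : ℝ) * m^n := by
        rcases Nat.eq_zero_or_pos n with h0 | hpos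
        · subst h0; simp
        · have : m^(n-1) * m = m^n := by
            rw [← pow_succ]; congr 1; omega
          rw [this]

lemma Ndiff_identity {X : Type*} [NormedAddCommGroup X] [NormedSpace ℂ X] [CompleteSpace X]
    (n : ℕ) (A : X →L[ℂ] X) (L N : ℤ → X →L[ℂ] X)
    (hN : ∀ k : ℤ, N k * Dop n A L k = 1 ∧ Dop n A L k * N k = 1) (k : ℤ) :
    (k:ℂ) • (N (k+1) - N k)
      = N (k+1) * ((((k:ℂ) * ((∑ j ∈ Finset.Icc 1 n, (Complex.I * (k : ℂ)) ^ j)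
            - ∑ j ∈ Finset.Icc 1 n, (Complex.I * ((k:ℂ)+1)) ^ j)) • N k)
          + ((k:ℂ) • (L (k+1) - L k)) * N k) := by
  have h1 : Dop n A L k * N k = 1 := (hN k).2
  have h2 : N (k+1) * Dop n A L (k+1) = 1 := (hN (k+1)).1
  have hD : Dop n A L k - Dop n A L (k+1)
      = ((∑ j ∈ Finset.Icc 1 n, (Complex.I * (k : ℂ)) ^ j)
          - ∑ j ∈ Finset.Icc 1 n, (Complex.I * ((k:ℂ)+1)) ^ j) • (1 : X →L[ℂ] X)
        + (L (k+1) - L k) := by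
    unfold Dop
    rw [sub_smul]
    push_cast
    abel
  have key : N (k+1) * (((k:ℂ) • (Dop n A L k - Dop n A L (k+1))) * N k)
      = (k:ℂ) • (N (k+1) - N k) := by
    simp only [smul_sub, sub_mul, mul_sub, smul_mul_assoc, mul_smul_comm, ← mul_assoc]
    rw [mul_assoc (N (k+1)), h1, h2, mul_one, one_mul]
  rw [← key, hD]
  simp only [smul_add, smul_smul, add_mul, mul_add, smul_mul_assoc, one_mul]

/-- `sup_{k∈ℤ} ‖k·(T_{k+1} − T_k)‖ < ∞` where `T_k = L_k·N_k`. -/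
theorem T_diff_bounded {X : Type*} [NormedAddCommGroup X] [NormedSpace ℂ X] [CompleteSpace X]
    (n : ℕ) (hn : 1 ≤ n) (A : X →L[ℂ] X) (L N : ℤ → X →L[ℂ] X)
    (hL : ∃ C : ℝ, ∀ k : ℤ, ‖L k‖ ≤ C)
    (hLdiff : ∃ C : ℝ, ∀ k : ℤ, ‖(k : ℂ) • (L (k + 1) - L k)‖ ≤ C)
    (hN : ∀ k : ℤ, N k * Dop n A L k = 1 ∧ Dop n A L k * N k = 1)
    (hNbdd : ∃ C : ℝ, ∀ k : ℤ, ‖N k‖ ≤ C)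
    (hSbdd : ∃ C : ℝ, ∀ k : ℤ, ‖((Complex.I * (k : ℂ)) ^ (n : ℕ)) • N k‖ ≤ C) :
    ∃ M > (0 : ℝ), ∀ k : ℤ, ‖(k : ℂ) • (L (k + 1) * N (k + 1) - L k * N k)‖ ≤ M := by
  obtain ⟨CL, hCL⟩ := hL
  obtain ⟨Cd, hCd⟩ := hLdiff
  obtain ⟨CN, hCN⟩ := hNbdd
  obtain ⟨CS, hCS⟩ := hSbdd
  have hCL0 : 0 ≤ CL := le_trans (norm_nonneg _) (hCL 0)
  have hCd0 : 0 ≤ Cd := le_trans (norm_nonneg _) (hCd 0)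
  have hCN0 : 0 ≤ CN := le_trans (norm_nonneg _) (hCN 0)
  have hCS0 : 0 ≤ CS := le_trans (norm_nonneg _) (hCS 0)
  set Q : ℝ := (n^2 * 2^n : ℝ) with hQ
  have hQ0 : 0 ≤ Q := by positivity
  refine ⟨Cd * CN + CL * (CN * (Q * (CN + CS) + Cd * CN)) + 1, by positivity, fun k => ?_⟩
  set c : ℂ := (k:ℂ) * ((∑ j ∈ Finset.Icc 1 n, (Complex.I * (k : ℂ)) ^ j)
      - ∑ j ∈ Finset.Icc 1 n, (Complex.I * ((k:ℂ)+1)) ^ j) with hc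
  set d : X →L[ℂ] X := (k:ℂ) • (L (k+1) - L k) with hd
  -- bound on |c|
  set m : ℝ := max 1 (|k| : ℝ) with hm
  have hm1 : (1:ℝ) ≤ m := le_max_left _ _
  have habs_c : ‖c‖ ≤ Q * m^n := by
    have : c = -((k : ℂ) * ∑ j ∈ Finset.Icc 1 n,
        ((Complex.I * ((k:ℂ)+1)) ^ j - (Complex.I * (k:ℂ)) ^ j)) := by
      rw [hc, Finset.sum_sub_distrib]; ring
    rw [this, norm_neg]
    exact scalar_bound_aux n k
  -- key estimate : m^n * ‖N k‖ ≤ CN + CS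
  have hmn : m^n * ‖N k‖ ≤ CN + CS := by
    rcases le_total (|k| : ℝ) 1 with h | h
    · have : m = 1 := max_eq_left h
      rw [this, one_pow, one_mul]
      linarith [hCN k]
    · have hmk : m = (|k| : ℝ) := max_eq_right h
      have hnorm : ‖((Complex.I * (k : ℂ)) ^ (n : ℕ)) • N k‖ = (|k|:ℝ)^n * ‖N k‖ := by
        rw [show ‖((Complex.I * (k : ℂ)) ^ (n : ℕ)) • N k‖
            = ‖(Complex.I * (k : ℂ)) ^ (n : ℕ)‖ * ‖N k‖ from norm_smul ((Complex.I * (k : ℂ)) ^ (n : ℕ)) (N k)]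
        congr 1
        rw [norm_pow, norm_mul, Complex.norm_I, one_mul,
          Complex.norm_intCast]
      rw [hmk, ← hnorm]
      linarith [hCS k, hCN k]
  have hcNk : ‖c • N k‖ ≤ Q * (CN + CS) := by
    rw [show ‖c • N k‖ = ‖c‖ * ‖N k‖ from norm_smul c (N k)]
    calc ‖c‖ * ‖N k‖ ≤ (Q * m^n) * ‖N k‖ :=
          mul_le_mul_of_nonneg_right habs_c (norm_nonneg _)
      _ = Q * (m^n * ‖N k‖) := by ring
      _ ≤ Q * (CN + CS) := mul_le_mul_of_nonneg_left hmn hQ0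
  -- bound on k • (N(k+1) - N k)
  have hNd : ‖(k:ℂ) • (N (k+1) - N k)‖ ≤ CN * (Q * (CN + CS) + Cd * CN) := by
    rw [Ndiff_identity n A L N hN k, ← hc, ← hd]
    calc ‖N (k+1) * (c • N k + d * N k)‖ ≤ ‖N (k+1)‖ * ‖c • N k + d * N k‖ := norm_mul_le _ _
      _ ≤ ‖N (k+1)‖ * (‖c • N k‖ + ‖d * N k‖) :=
          mul_le_mul_of_nonneg_left (norm_add_le _ _) (norm_nonneg _)
      _ ≤ CN * (Q * (CN + CS) + Cd * CN) := by
          apply mul_le_mul (hCN _) _ (by positivity) hCN0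
          apply add_le_add hcNk
          calc ‖d * N k‖ ≤ ‖d‖ * ‖N k‖ := norm_mul_le _ _
            _ ≤ Cd * CN := mul_le_mul (hCd k) (hCN k) (norm_nonneg _) hCd0
  -- main identity
  have hT : (k:ℂ) • (L (k+1) * N (k+1) - L k * N k)
      = d * N (k+1) + L k * ((k:ℂ) • (N (k+1) - N k)) := by
    rw [hd]
    simp only [smul_sub, sub_mul, mul_sub, smul_mul_assoc, mul_smul_comm]
    abel
  rw [hT]
  calc ‖d * N (k+1) + L k * ((k:ℂ) • (N (k+1) - N k))‖
      ≤ ‖d * N (k+1)‖ + ‖L k * ((k:ℂ) • (N (k+1) - N k))‖ := norm_add_le _ _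
    _ ≤ ‖d‖ * ‖N (k+1)‖ + ‖L k‖ * ‖(k:ℂ) • (N (k+1) - N k)‖ :=
        add_le_add (norm_mul_le _ _) (norm_mul_le _ _)
    _ ≤ Cd * CN + CL * (CN * (Q * (CN + CS) + Cd * CN)) := by
        apply add_le_add
        · exact mul_le_mul (hCd k) (hCN _) (norm_nonneg _) hCd0
        · exact mul_le_mul (hCL k) hNd (norm_nonneg _) hCL0
    _ ≤ Cd * CN + CL * (CN * (Q * (CN + CS) + Cd * CN)) + 1 := by linarith
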